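/- Let H be a d×d real symmetric positive semidefinite matrix, and let γ, α, σ² > 0 satisfy γ·α·tr(H) < 1. Let 𝒫 be a linear map on d×d real symmetric matrices that is monotone with respect to the Loewner order (A ⪯ B implies 𝒫(A) ⪯ 𝒫(B)) and satisfies 𝒫(I) ⪯ I − 2γH + γ²·α·tr(H)·H. Suppose C₀ = 0 and, for each t ≥ 1, C_t is a symmetric matrix with C_t ⪯ 𝒫(C_{t−1}) + γ²σ²H. Then for every t ≥ 0, C_t ⪯ (γσ²/(1 − γ·α·tr(H)))·I. -/

import Mathlib

private lemma psd_smul {d : ℕ} {A : Matrix (Fin d) (Fin d) ℝ} (hA : A.PosSemidef)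
    {c : ℝ} (hc : 0 ≤ c) : (c • A).PosSemidef := by
  refine ⟨?_, fun x => ?_⟩
  · rw [Matrix.IsHermitian, Matrix.conjTranspose_smul, hA.1.eq]
    simp
  · exact (hA.smul hc).2 x

private lemma herm_smul {d : ℕ} {A : Matrix (Fin d) (Fin d) ℝ} (hA : A.IsHermitian)
    (c : ℝ) : (c • A).IsHermitian := by
  rw [Matrix.IsHermitian, Matrix.conjTranspose_smul, hA.eq]; simp

/-- Crude variance bound for the abstract SGD covariance recursion: if the monotone linear
transition map `P` satisfies `P(I) ⪯ I − 2γH + γ²·α·tr(H)·H` and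
`C_{t+1} ⪯ P(C_t) + γ²σ²H` with `C₀ = 0`, then `C_t ⪯ (γσ²/(1 − γα tr H))·I` for all `t`. -/
theorem crude_variance_bound {d : ℕ}
    (H : Matrix (Fin d) (Fin d) ℝ) (hH : H.PosSemidef)
    (γ α σ2 : ℝ) (hγ : 0 < γ) (hα : 0 < α) (hσ : 0 < σ2)
    (hstep : γ * α * H.trace < 1)
    (P : Matrix (Fin d) (Fin d) ℝ →ₗ[ℝ] Matrix (Fin d) (Fin d) ℝ)
    (hmono : ∀ A B : Matrix (Fin d) (Fin d) ℝ,
      A.IsHermitian → B.IsHermitian → (B - A).PosSemidef → (P B - P A).PosSemidef)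
    (hPI : (((1 : Matrix (Fin d) (Fin d) ℝ) - (2 * γ) • H + (γ ^ 2 * α * H.trace) • H)
      - P 1).PosSemidef)
    (C : ℕ → Matrix (Fin d) (Fin d) ℝ)
    (hC0 : C 0 = 0)
    (hCsymm : ∀ t, (C t).IsHermitian)
    (hCrec : ∀ t, ((P (C t) + (γ ^ 2 * σ2) • H) - C (t + 1)).PosSemidef) :
    ∀ t, ((γ * σ2 / (1 - γ * α * H.trace)) • (1 : Matrix (Fin d) (Fin d) ℝ)
      - C t).PosSemidef := by
  set c : ℝ := γ * σ2 / (1 - γ * α * H.trace) with hc_def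
  have hden : 0 < 1 - γ * α * H.trace := by linarith
  have hc : 0 < c := div_pos (by positivity) hden
  have hkey : c * (1 - γ * α * H.trace) = γ * σ2 := div_mul_cancel₀ _ hden.ne'
  intro t
  induction t with
  | zero =>
    rw [hC0, sub_zero]
    exact psd_smul Matrix.PosSemidef.one hc.le
  | succ t ih =>
    have hA1 := hCrec t
    have hA2 : (P (c • (1 : Matrix (Fin d) (Fin d) ℝ)) - P (C t)).PosSemidef :=
      hmono (C t) (c • 1) (hCsymm t)
        (herm_smul Matrix.isHermitian_one c) ih
    have hA3 : ((c • (((1 : Matrix (Fin d) (Fin d) ℝ) - (2 * γ) • H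
        + (γ ^ 2 * α * H.trace) • H) - P 1))).PosSemidef := psd_smul hPI hc.le
    have hA4 : ((c * γ) • H).PosSemidef := psd_smul hH (by positivity)
    have hsum := (hA1.add hA2).add (hA3.add hA4)
    have heq : (P (C t) + (γ ^ 2 * σ2) • H - C (t + 1))
        + (P (c • (1 : Matrix (Fin d) (Fin d) ℝ)) - P (C t))
        + ((c • (((1 : Matrix (Fin d) (Fin d) ℝ) - (2 * γ) • H
            + (γ ^ 2 * α * H.trace) • H) - P 1)) + (c * γ) • H)
        = c • (1 : Matrix (Fin d) (Fin d) ℝ) - C (t + 1) := by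
      rw [map_smul]
      have hco : c * γ = 2 * c * γ - c * (γ ^ 2 * α * H.trace) - γ ^ 2 * σ2 := by
        nlinarith [hkey]
      rw [hco]
      module
    rwa [heq] at hsum
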